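/- Let K ⊆ ℂ be a subfield, m a positive integer, and ζ a root of unity with ζ^m ∈ K and [K(ζ):K] = m−1. If a₀,…,a_{m−1}, b₀,…,b_{m−1} ∈ K satisfy Σᵢ aᵢζⁱ = Σᵢ bᵢζⁱ and a_k ≠ b_k for some k, then |aᵢ − bᵢ| = |a_j − b_j| ≠ 0 for all i, j ∈ {0,…,m−1}. -/

import Mathlib

open Polynomial

private lemma coeff_vec (K : IntermediateField ℚ ℂ) {m : ℕ} (c : Fin m → K) (j : Fin m) :
    (∑ i, Polynomial.C (c i) * Polynomial.X ^ (i : ℕ)).coeff (j : ℕ) = c j := by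
  classical
  rw [finset_sum_coeff]
  rw [Finset.sum_eq_single j]
  · simp
  · intro i _ hij
    have h2 : (j : ℕ) ≠ (i : ℕ) := fun h => hij (Fin.ext h.symm)
    simp [coeff_X_pow, h2]
  · simp

private lemma key_prop (K : IntermediateField ℚ ℂ) {m : ℕ} (ζ : ℂ)
    (hint : IsIntegral K ζ) (hdeg : (minpoly K ζ).natDegree = m - 1)
    (c : Fin m → K) (hsum : ∑ i, (c i : ℂ) * ζ ^ (i : ℕ) = 0) :
    ∃ v : K, ∀ i : Fin m, c i = v * (minpoly K ζ).coeff i := by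
  classical
  set f : Polynomial K := ∑ i, Polynomial.C (c i) * Polynomial.X ^ (i : ℕ) with hf
  have hdegf : f.natDegree ≤ m - 1 := by
    apply Polynomial.natDegree_sum_le_of_forall_le
    intro i _
    calc (Polynomial.C (c i) * Polynomial.X ^ (i : ℕ)).natDegree ≤ (i : ℕ) :=
          natDegree_C_mul_X_pow_le _ _
      _ ≤ m - 1 := by have := i.isLt; omega
  have heval : Polynomial.aeval ζ f = 0 := by
    rw [hf, map_sum]
    simpa using hsum
  obtain ⟨q, hq⟩ := minpoly.dvd K ζ heval
  have hp0 : minpoly K ζ ≠ 0 := minpoly.ne_zero hint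
  have hq0 : q.natDegree = 0 := by
    rcases eq_or_ne q 0 with h | h
    · simp [h]
    · rw [hq, Polynomial.natDegree_mul hp0 h, hdeg] at hdegf
      omega
  refine ⟨q.coeff 0, fun i => ?_⟩
  have h1 : ((minpoly K ζ) * Polynomial.C (q.coeff 0)).coeff (i : ℕ) = c i := by
    rw [← Polynomial.eq_C_of_natDegree_eq_zero hq0, ← hq]
    exact coeff_vec K c i
  rw [coeff_mul_C] at h1
  rw [← h1, mul_comm]

theorem coeff_comparison_diff_abs (K : IntermediateField ℚ ℂ) (m : ℕ) (hm : 0 < m)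
    (ζ : ℂ) (hζ : ∃ n : ℕ, 0 < n ∧ ζ ^ n = 1) (hζm : ζ ^ m ∈ K)
    (hdeg : Module.finrank K (IntermediateField.adjoin K {ζ}) = m - 1)
    (a b : Fin m → ℂ) (haK : ∀ i, a i ∈ K) (hbK : ∀ i, b i ∈ K)
    (hsum : ∑ i, a i * ζ ^ (i : ℕ) = ∑ i, b i * ζ ^ (i : ℕ))
    (k : Fin m) (hk : a k ≠ b k) :
    ∀ i j : Fin m, ‖a i - b i‖ = ‖a j - b j‖
      ∧ ‖a i - b i‖ ≠ 0 := by
  classical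
  obtain ⟨n, hn, hζn⟩ := hζ
  have hint : IsIntegral K ζ :=
    ⟨Polynomial.X ^ n - Polynomial.C 1, monic_X_pow_sub_C 1 hn.ne', by
      simp [hζn]⟩
  have hdeg' : (minpoly K ζ).natDegree = m - 1 :=
    (IntermediateField.adjoin.finrank hint).symm.trans hdeg
  have hm2 : 2 ≤ m := by
    have := minpoly.natDegree_pos hint
    omega
  set w : K := ⟨ζ ^ m, hζm⟩ with hw
  set p := minpoly K ζ with hp
  have hpm : p.Monic := minpoly.monic hint
  obtain ⟨q, hq⟩ := minpoly.dvd K ζ (p := Polynomial.X ^ m - Polynomial.C w) (by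
    rw [map_sub, map_pow, aeval_X, aeval_C]
    show ζ ^ m - algebraMap K ℂ w = 0
    simp [hw])
  have hXmw : (Polynomial.X ^ m - Polynomial.C w : Polynomial K).Monic :=
    monic_X_pow_sub_C w hm.ne'
  have hqm : q.Monic := hpm.of_mul_monic_left (hq ▸ hXmw)
  have hqdeg : q.natDegree = 1 := by
    have h1 : (Polynomial.X ^ m - Polynomial.C w : Polynomial K).natDegree = m :=
      natDegree_X_pow_sub_C
    rw [hq, natDegree_mul hpm.ne_zero hqm.ne_zero, hdeg'] at h1
    omega
  have hqX : q = Polynomial.X + Polynomial.C (q.coeff 0) := hqm.eq_X_add_C hqdeg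
  set e := q.coeff 0 with he
  set d : K := -e with hd
  have hrec : ∀ j : ℕ, j + 1 ≤ m - 1 → p.coeff j = d * p.coeff (j + 1) := by
    intro j hj
    have h := congrArg (fun r => Polynomial.coeff r (j + 1)) hq
    rw [hqX] at h
    simp only [coeff_sub, coeff_X_pow, coeff_C, mul_add, coeff_add, coeff_mul_X,
      coeff_mul_C] at h
    rw [if_neg (by omega), if_neg (by omega)] at h
    have h' : 0 = p.coeff j + p.coeff (j + 1) * e := by simpa using h
    rw [hd]
    linear_combination -h'
  have h0 : d * p.coeff 0 = w := by
    have h := congrArg (fun r => Polynomial.coeff r 0) hq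
    rw [hqX] at h
    have hm0 : (0 : ℕ) ≠ m := by omega
    simp [coeff_X_pow, mul_add, hm0] at h
    rw [← hp] at h
    rw [hd]
    linear_combination h
  have hcoeff : ∀ t : ℕ, t ≤ m - 1 → p.coeff (m - 1 - t) = d ^ t := by
    intro t
    induction t with
    | zero =>
      intro _
      have := hpm.coeff_natDegree
      rw [hdeg'] at this
      simpa using this
    | succ t ih =>
      intro ht
      have h1 : m - 1 - (t + 1) + 1 = m - 1 - t := by omega
      have h2 := hrec (m - 1 - (t + 1)) (by omega)
      rw [h1] at h2
      rw [h2, ih (by omega), pow_succ]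
      ring
  have hdm : d ^ m = w := by
    have h1 : p.coeff 0 = d ^ (m - 1) := by
      have := hcoeff (m - 1) le_rfl
      simpa using this
    rw [h1] at h0
    calc d ^ m = d * d ^ (m - 1) := by
          rw [← pow_succ']
          congr 1
          omega
      _ = w := h0
  -- now the coefficient vector
  set c : Fin m → K := fun i => ⟨a i - b i, sub_mem (haK i) (hbK i)⟩ with hc
  have hsum0 : ∑ i, ((c i : ℂ)) * ζ ^ (i : ℕ) = 0 := by
    have h1 : ∑ i, (a i - b i) * ζ ^ (i : ℕ) = 0 := by
      rw [Finset.sum_congr rfl fun i _ => sub_mul (a i) (b i) (ζ ^ (i : ℕ)),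
        Finset.sum_sub_distrib, hsum, sub_self]
    simpa [hc] using h1
  obtain ⟨v, hv⟩ := key_prop K ζ hint hdeg' c hsum0
  have hvne : v ≠ 0 := by
    intro h
    apply hk
    have h1 := congrArg (Subtype.val) (hv k)
    rw [h, zero_mul] at h1
    have h2 : a k - b k = 0 := by simpa [hc] using h1
    exact sub_eq_zero.mp h2
  have hζabs : ‖ζ‖ = 1 := Complex.norm_eq_one_of_pow_eq_one hζn hn.ne'
  have hdabs : ‖(d : ℂ)‖ = 1 := by
    have h1 : ((d : ℂ)) ^ m = ζ ^ m := by
      have h2 := congrArg (Subtype.val) hdm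
      push_cast at h2
      simpa [hw] using h2
    have h2 : ‖(d : ℂ)‖ ^ m = 1 := by
      rw [← norm_pow, h1, norm_pow, hζabs, one_pow]
    by_contra hne
    rcases lt_or_gt_of_ne hne with hlt | hgt
    · have h3 := pow_lt_one₀ (norm_nonneg (d : ℂ)) hlt hm.ne'
      rw [h2] at h3; exact lt_irrefl 1 h3
    · have h3 := one_lt_pow₀ hgt hm.ne'
      rw [h2] at h3; exact lt_irrefl 1 h3
  have habs : ∀ i : Fin m, ‖a i - b i‖ = ‖(v : ℂ)‖ := by
    intro i
    have hco : p.coeff (i : ℕ) = d ^ (m - 1 - (i : ℕ)) := by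
      have h1 : m - 1 - (m - 1 - (i : ℕ)) = (i : ℕ) := by have := i.isLt; omega
      have h2 := hcoeff (m - 1 - (i : ℕ)) (by omega)
      rw [h1] at h2
      exact h2
    have h3 := congrArg (Subtype.val) (hv i)
    rw [hco] at h3
    push_cast at h3
    have h4 : a i - b i = (v : ℂ) * ((d : ℂ)) ^ (m - 1 - (i : ℕ)) := by
      simpa [hc] using h3
    rw [h4, norm_mul, norm_pow, hdabs, one_pow, mul_one]
  intro i j
  refine ⟨by rw [habs i, habs j], ?_⟩
  rw [habs i]
  have : (v : ℂ) ≠ 0 := by exact_mod_cast hvne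
  simpa using this
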